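/- The map θ ↦ max(2/3, θ) from ℝ to ℝ is not differentiable at θ = 2/3. Moreover, the function h : [0,1] → ℝ defined by h(θ) = −(8/3)θ − 16/9 for θ ∈ [0, 2/3] and h(θ) = −2θ² − 4θ for θ ∈ [2/3, 1] is not differentiable at θ = 2/3 and is not convex on [0,1]. -/

import Mathlib

open Set

/-- The social cost `h(θ) = Σᵢ f_i(x(θ), θ)` of the two-player game evaluated at the
Nash equilibrium `x(θ) = (max (2/3) θ, max (2/3) θ)`: it equals `−(8/3)θ − 16/9` for
`θ ≤ 2/3` and `−2θ² − 4θ` for `θ ≥ 2/3`. -/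
noncomputable def socialCost (θ : ℝ) : ℝ :=
  if θ ≤ 2/3 then -(8/3) * θ - 16/9 else -2 * θ ^ 2 - 4 * θ

lemma part1 : ¬ DifferentiableAt ℝ (fun θ : ℝ => max (2/3) θ) (2/3) := by
  intro h
  set f : ℝ → ℝ := fun θ => max (2/3) θ with hf
  have hd := h.hasDerivAt
  have hleft : HasDerivWithinAt f (deriv f (2/3)) (Iic (2/3)) (2/3) :=
    hd.hasDerivWithinAt
  have hright : HasDerivWithinAt f (deriv f (2/3)) (Ici (2/3)) (2/3) :=
    hd.hasDerivWithinAt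
  have h0 : HasDerivWithinAt f 0 (Iic (2/3)) (2/3) := by
    have := (hasDerivWithinAt_const (2/3 : ℝ) (Iic (2/3)) (2/3 : ℝ))
    refine this.congr (fun x hx => ?_) (by simp [hf])
    simp [hf, max_eq_left (mem_Iic.mp hx)]
  have h1 : HasDerivWithinAt f 1 (Ici (2/3)) (2/3) := by
    have := (hasDerivWithinAt_id (2/3 : ℝ) (Ici (2/3)))
    refine this.congr (fun x hx => ?_) (by simp [hf])
    simp [hf, max_eq_right (mem_Ici.mp hx)]
  have e0 : deriv f (2/3) = 0 := by
    rw [← hleft.derivWithin (uniqueDiffOn_Iic _ _ (by simp)),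
        h0.derivWithin (uniqueDiffOn_Iic _ _ (by simp))]
  have e1 : deriv f (2/3) = 1 := by
    rw [← hright.derivWithin (uniqueDiffOn_Ici _ _ (by simp)),
        h1.derivWithin (uniqueDiffOn_Ici _ _ (by simp))]
  rw [e0] at e1; norm_num at e1

lemma part2 : ¬ DifferentiableWithinAt ℝ socialCost (Set.Icc (0:ℝ) 1) (2/3) := by
  intro h
  set d := derivWithin socialCost (Icc (0:ℝ) 1) (2/3) with hd
  have hD := h.hasDerivWithinAt
  have hL : HasDerivWithinAt socialCost d (Icc (0:ℝ) (2/3)) (2/3) :=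
    hD.mono (Icc_subset_Icc le_rfl (by norm_num))
  have hR : HasDerivWithinAt socialCost d (Icc (2/3:ℝ) 1) (2/3) :=
    hD.mono (Icc_subset_Icc (by norm_num) le_rfl)
  have uL : UniqueDiffWithinAt ℝ (Icc (0:ℝ) (2/3)) (2/3) :=
    (uniqueDiffOn_Icc (by norm_num)) _ (by constructor <;> norm_num)
  have uR : UniqueDiffWithinAt ℝ (Icc (2/3:ℝ) 1) (2/3) :=
    (uniqueDiffOn_Icc (by norm_num)) _ (by constructor <;> norm_num)
  have h0 : HasDerivWithinAt socialCost (-(8/3)) (Icc (0:ℝ) (2/3)) (2/3) := by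
    have hg : HasDerivWithinAt (fun x : ℝ => -(8/3) * x - 16/9) (-(8/3))
        (Icc (0:ℝ) (2/3)) (2/3) := by
      simpa using (((hasDerivWithinAt_id (2/3:ℝ) (Icc (0:ℝ) (2/3))).const_mul
        (-(8/3):ℝ)).sub_const (16/9))
    refine hg.congr (fun x hx => ?_) (by simp [socialCost])
    simp [socialCost, hx.2]
  have h1 : HasDerivWithinAt socialCost (-(20/3)) (Icc (2/3:ℝ) 1) (2/3) := by
    have hg : HasDerivWithinAt (fun x : ℝ => -2 * x ^ 2 - 4 * x) (-(20/3))
        (Icc (2/3:ℝ) 1) (2/3) := by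
      have : HasDerivAt (fun x : ℝ => -2 * x ^ 2 - 4 * x)
          (-2 * (2 * (2/3)) - 4) (2/3) := by
        have h2 : HasDerivAt (fun x : ℝ => x ^ 2) (2 * (2/3)) (2/3) := by
          simpa using (hasDerivAt_pow 2 (2/3 : ℝ))
        exact ((h2.const_mul (-2:ℝ)).sub ((hasDerivAt_id (2/3:ℝ)).const_mul 4)).congr_deriv (by ring)
      have := this.hasDerivWithinAt (s := Icc (2/3:ℝ) 1)
      exact this.congr_deriv (by norm_num)
    refine hg.congr (fun x hx => ?_) ?_
    · rcases eq_or_lt_of_le hx.1 with h' | h'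
      · simp [socialCost, ← h']; norm_num
      · simp [socialCost, not_le.mpr h']
    · simp [socialCost]; norm_num
  have eL : d = -(8/3) := by
    rw [← hL.derivWithin uL, h0.derivWithin uL]
  have eR : d = -(20/3) := by
    rw [← hR.derivWithin uR, h1.derivWithin uR]
  rw [eL] at eR; norm_num at eR

theorem nash_map_and_social_cost_nonsmooth_nonconvex :
    ¬ DifferentiableAt ℝ (fun θ : ℝ => max (2/3) θ) (2/3) ∧
    ¬ DifferentiableWithinAt ℝ socialCost (Set.Icc (0:ℝ) 1) (2/3) ∧
    ¬ ConvexOn ℝ (Set.Icc (0:ℝ) 1) socialCost := by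
  refine ⟨part1, part2, ?_⟩
  intro hc
  have := hc.2 (show (1/3:ℝ) ∈ Icc (0:ℝ) 1 by constructor <;> norm_num)
    (show (1:ℝ) ∈ Icc (0:ℝ) 1 by constructor <;> norm_num)
    (show (0:ℝ) ≤ 1/2 by norm_num) (show (0:ℝ) ≤ 1/2 by norm_num)
    (show (1/2:ℝ) + 1/2 = 1 by norm_num)
  norm_num [socialCost] at this
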